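/- Let A and B be nonempty finite types, each with a distinguished element 0, and write e₀ for the standard basis vector of ℂ^{A×B} at index (0,0). Let U and V be unitary matrices on ℂ^{A×B}. Let |ρ⟩ = U·e₀ with reduced density matrix ρ_A on A, and let |σ⟩ = V·e₀ with reduced density matrix σ_A on A. Let SWAP_{BB'} be the permutation unitary on ℂ^{(A×B)×(A×B)} sending the basis vector at index ((a,b),(a',b')) to the basis vector at index ((a,b'),(a',b)), and set W = (V† ⊗ I_{A×B}) · SWAP_{BB'} · (U ⊗ V). Then ∑_{(a',b') ∈ A×B} |(W (e₀ ⊗ e₀)) ((0,0),(a',b'))|² = trace(ρ_A · σ_A · σ_A), i.e., the squared norm of the projection of W(e₀⊗e₀) onto basis states whose first A×B component is (0,0) equals tr(ρσ²). -/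

import Mathlib

open Matrix Kronecker Finset

noncomputable section

/-- Kronecker (tensor) product of two vectors. -/
def vecKron {I J : Type*} (x : I → ℂ) (y : J → ℂ) : I × J → ℂ := fun p => x p.1 * y p.2

/-- Reduced density matrix on `A` of a vector `v ∈ ℂ^{A×B}`. -/
def reducedA {A B : Type*} [Fintype B] (v : A × B → ℂ) : Matrix A A ℂ :=
  Matrix.of fun i i' => ∑ j, v (i, j) * star (v (i', j))

/-- The permutation unitary `SWAP_{BB'}` on `ℂ^{(A×B)×(A×B)}`, sending the basis vector at
index `((a,b),(a',b'))` to the basis vector at index `((a,b'),(a',b))`. -/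
def swapBB (A B : Type*) [DecidableEq A] [DecidableEq B] :
    Matrix ((A × B) × (A × B)) ((A × B) × (A × B)) ℂ :=
  Matrix.of fun i j => if i = ((j.1.1, j.2.2), (j.2.1, j.1.2)) then 1 else 0

lemma kron_mulVec {I J K L : Type*} [Fintype K] [Fintype L]
    (M : Matrix I K ℂ) (N : Matrix J L ℂ) (x : K → ℂ) (y : L → ℂ) :
    (M ⊗ₖ N) *ᵥ vecKron x y = vecKron (M *ᵥ x) (N *ᵥ y) := by
  ext ⟨i, j⟩
  simp [mulVec, dotProduct, vecKron, kroneckerMap_apply, Fintype.sum_prod_type,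
    Finset.mul_sum, Finset.sum_mul]
  rw [Finset.sum_comm]
  apply Finset.sum_congr rfl; intro l _
  apply Finset.sum_congr rfl; intro k _
  ring

lemma swap_mulVec {A B : Type*} [Fintype A] [Fintype B] [DecidableEq A] [DecidableEq B]
    (z : (A × B) × (A × B) → ℂ) (i : (A × B) × (A × B)) :
    (swapBB A B *ᵥ z) i = z ((i.1.1, i.2.2), (i.2.1, i.1.2)) := by
  obtain ⟨⟨a, b⟩, a', b'⟩ := i
  simp only [swapBB, mulVec, dotProduct, of_apply]
  rw [Finset.sum_eq_single ((a, b'), (a', b))]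
  · simp
  · intro j _ hj
    rw [if_neg, zero_mul]
    intro h
    apply hj
    obtain ⟨⟨h1, h2⟩, h3, h4⟩ : (a = j.1.1 ∧ b = j.2.2) ∧ a' = j.2.1 ∧ b' = j.1.2 := by
      simpa [Prod.ext_iff] using h
    simp [Prod.ext_iff, h1.symm, h2.symm, h3.symm, h4.symm]
  · simp

lemma kronOne_mulVec {I J : Type*} [Fintype I] [Fintype J] [DecidableEq J]
    (M : Matrix I I ℂ) (z : I × J → ℂ) (i : I) (j : J) :
    ((M ⊗ₖ (1 : Matrix J J ℂ)) *ᵥ z) (i, j) = ∑ k, M i k * z (k, j) := by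
  simp only [mulVec, dotProduct, kroneckerMap_apply, Matrix.one_apply]
  rw [Fintype.sum_prod_type]
  simp only [mul_ite, mul_one, mul_zero, ite_mul, zero_mul, Finset.sum_ite_eq,
    Finset.mem_univ, if_true]

lemma reducedA_star {A B : Type*} [Fintype B] (v : A × B → ℂ) (i i' : A) :
    star (reducedA v i i') = reducedA v i' i := by
  simp [reducedA, star_sum, star_mul', mul_comm]

lemma key_formula {A B : Type*} [Fintype A] [Fintype B] [DecidableEq A] [DecidableEq B]
    [Zero A] [Zero B]
    (U V : Matrix (A × B) (A × B) ℂ)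
    (e0 : A × B → ℂ) (he0 : e0 = fun p => if p = ((0 : A), (0 : B)) then 1 else 0)
    (W : Matrix ((A × B) × (A × B)) ((A × B) × (A × B)) ℂ)
    (hW : W = (Vᴴ ⊗ₖ (1 : Matrix (A × B) (A × B) ℂ)) * swapBB A B * (U ⊗ₖ V))
    (p : A × B) :
    (W *ᵥ vecKron e0 e0) (((0 : A), (0 : B)), p)
      = ∑ c : A, (U *ᵥ e0) (c, p.2) * reducedA (V *ᵥ e0) p.1 c := by
  have hv0 : ∀ k : A × B, (V *ᵥ e0) k = V k ((0 : A), (0 : B)) := by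
    intro k; simp [he0, mulVec, dotProduct]
  rw [hW, ← Matrix.mulVec_mulVec, ← Matrix.mulVec_mulVec, kron_mulVec]
  rw [show (((0 : A), (0 : B)), p) = ((((0 : A), (0 : B)) : A × B), p) from rfl]
  rw [kronOne_mulVec]
  simp only [_root_.swap_mulVec, conjTranspose_apply, vecKron]
  rw [Fintype.sum_prod_type]
  simp only [reducedA, Matrix.of_apply, Finset.mul_sum]
  apply Finset.sum_congr rfl; intro c _
  apply Finset.sum_congr rfl; intro d _
  rw [← hv0]
  ring

lemma combine {A B : Type*} [Fintype A] [Fintype B] (u v : A × B → ℂ) :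
    (∑ p : A × B, (∑ c, u (c, p.2) * reducedA v p.1 c)
        * star (∑ c, u (c, p.2) * reducedA v p.1 c))
      = (reducedA u * reducedA v * reducedA v).trace := by
  have hρ : ∀ i i' : A, reducedA u i i' = ∑ b, u (i, b) * star (u (i', b)) := fun _ _ => rfl
  simp only [star_sum, star_mul', reducedA_star, Finset.sum_mul_sum]
  simp only [Matrix.trace, Matrix.diag_apply, Matrix.mul_apply, hρ, Finset.sum_mul]
  conv_lhs => rw [Finset.sum_comm]
  apply Finset.sum_congr rfl; intro c _
  rw [Finset.sum_comm]
  conv_rhs => rw [Finset.sum_comm]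
  apply Finset.sum_congr rfl; intro c' _
  rw [Fintype.sum_prod_type]
  apply Finset.sum_congr rfl; intro a _
  apply Finset.sum_congr rfl; intro b _
  ring

lemma norm_sq_cast (z : ℂ) : ((‖z‖ ^ 2 : ℝ) : ℂ) = z * star z := by
  rw [← Complex.normSq_eq_norm_sq, ← Complex.mul_conj]
  simp [Complex.star_def]

theorem stmt1 {A B : Type*} [Fintype A] [Fintype B] [DecidableEq A] [DecidableEq B]
    [Zero A] [Zero B]
    (U V : Matrix (A × B) (A × B) ℂ)
    (hU : U ∈ Matrix.unitaryGroup (A × B) ℂ) (hV : V ∈ Matrix.unitaryGroup (A × B) ℂ)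
    (e0 : A × B → ℂ) (he0 : e0 = fun p => if p = ((0 : A), (0 : B)) then 1 else 0)
    (W : Matrix ((A × B) × (A × B)) ((A × B) × (A × B)) ℂ)
    (hW : W = (Vᴴ ⊗ₖ (1 : Matrix (A × B) (A × B) ℂ)) * swapBB A B * (U ⊗ₖ V)) :
    ((∑ p : A × B, ‖(W *ᵥ vecKron e0 e0) ((((0 : A), (0 : B))), p)‖ ^ 2 : ℝ) : ℂ)
      = (reducedA (U *ᵥ e0) * reducedA (V *ᵥ e0) * reducedA (V *ᵥ e0)).trace := by
  rw [Complex.ofReal_sum]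
  simp only [norm_sq_cast, key_formula U V e0 he0 W hW]
  exact combine (U *ᵥ e0) (V *ᵥ e0)

end
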